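/- arXiv:2406.12565 — 2 statements merged into one kernel-verified Lean document; each statement's English description precedes it below -/
import Mathlib

section
/- For β ∈ ℂ with β ∉ ℤ, the 1-cocycle δ_{1-β,β} of the Witt algebra with coefficients in 𝓕_{1-β} ⊗ 𝓕_β is not a 1-coboundary: there is no element u ∈ 𝓕_{1-β} ⊗ 𝓕_β with δ_{1-β,β}(L_n) = L_n · u for all n ∈ ℤ. -/
set_option maxRecDepth 8000

/-- The action of the Witt basis element `L m` on `𝓕_α ⊗ 𝓕_β`, realized on
`(ℤ × ℤ) →₀ ℂ` with basis `v_i ⊗ w_j ↦ single (i, j) 1`: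
`L_m · (v_i ⊗ w_j) = -(i + αm) v_{m+i} ⊗ w_j - (j + βm) v_i ⊗ w_{m+j}`. -/
noncomputable def tact (α β : ℂ) (m : ℤ) : ((ℤ × ℤ) →₀ ℂ) →ₗ[ℂ] ((ℤ × ℤ) →₀ ℂ) :=
  Finsupp.lsum ℂ fun p => LinearMap.toSpanSingleton ℂ ((ℤ × ℤ) →₀ ℂ)
    ((-((p.1 : ℂ) + α * m)) • Finsupp.single (m + p.1, p.2) (1 : ℂ)
      + (-((p.2 : ℂ) + β * m)) • Finsupp.single (p.1, m + p.2) (1 : ℂ))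

/-- A family `d n = d(L_n)` is a 1-cocycle of the Witt algebra with
coefficients in `𝓕_α ⊗ 𝓕_β`: `d([L_m, L_n]) = L_m · d(L_n) - L_n · d(L_m)`. -/
def IsCocycle (α β : ℂ) (d : ℤ → ((ℤ × ℤ) →₀ ℂ)) : Prop :=
  ∀ m n : ℤ, ((m - n : ℤ) : ℂ) • d (m + n) = tact α β m (d n) - tact α β n (d m)

/-- `d` is a 1-coboundary: `d(L_n) = L_n · u` for a fixed `u` in the module. -/
def IsCoboundary (α β : ℂ) (d : ℤ → ((ℤ × ℤ) →₀ ℂ)) : Prop :=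
  ∃ u : (ℤ × ℤ) →₀ ℂ, ∀ n : ℤ, d n = tact α β n u

/-- The map `δ_{1-β,β} : 𝒲 → 𝓕_{1-β} ⊗ 𝓕_β`. -/
noncomputable def deltaβ (β : ℂ) (n : ℤ) : (ℤ × ℤ) →₀ ℂ :=
  if 1 ≤ n then
    ∑ i ∈ Finset.Icc (0 : ℤ) (n - 1), ((i : ℂ) - n * β) • Finsupp.single (i, n - i) (1 : ℂ)
  else if n = 0 then 0
  else - ∑ i ∈ Finset.Icc n (-1 : ℤ), ((i : ℂ) - n * β) • Finsupp.single (i, n - i) (1 : ℂ)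

/-- Pointwise formula for the action `tact`. -/
lemma tact_apply (α β : ℂ) (m a b : ℤ) (u : (ℤ × ℤ) →₀ ℂ) :
    tact α β m u (a, b)
      = -(((a : ℂ) - m) + α * m) * u (a - m, b)
        + -(((b : ℂ) - m) + β * m) * u (a, b - m) := by
  induction u using Finsupp.induction_linear with
  | zero => simp
  | add f g hf hg => simp only [map_add, Finsupp.add_apply, hf, hg]; ring
  | single p c =>
    rcases p with ⟨p1, p2⟩
    have h3 : (p1 = a - m ∧ p2 = b) ↔ (m + p1 = a ∧ p2 = b) := by omega
    have h4 : (p1 = a ∧ p2 = b - m) ↔ (p1 = a ∧ m + p2 = b) := by omega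
    simp only [tact, Finsupp.lsum_single, LinearMap.toSpanSingleton_apply,
      Finsupp.smul_apply, Finsupp.add_apply, Finsupp.single_apply, Prod.mk.injEq,
      smul_add, smul_eq_mul, h3, h4]
    split_ifs with hC1 hC2 hC2
    · obtain ⟨rfl, rfl⟩ := hC1
      obtain ⟨e1, e2⟩ := hC2
      have hm : m = 0 := by omega
      subst hm
      push_cast; ring
    · obtain ⟨rfl, rfl⟩ := hC1
      push_cast; ring
    · obtain ⟨rfl, rfl⟩ := hC2
      push_cast; ring
    · ring

lemma deltaβ_zero (β : ℂ) : deltaβ β 0 = 0 := by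
  norm_num [deltaβ]

lemma deltaβ_one (β : ℂ) (k : ℤ) :
    deltaβ β 1 (k, 1 - k) = if k = 0 then -β else 0 := by
  have : deltaβ β 1 = ((0 : ℂ) - 1 * β) • Finsupp.single ((0 : ℤ), (1 : ℤ)) (1 : ℂ) := by
    simp [deltaβ]
  rw [this]
  rw [Finsupp.smul_apply, Finsupp.single_apply]
  by_cases hk : k = 0
  · subst hk; norm_num
  · rw [if_neg hk, if_neg (by simp [Prod.ext_iff]; omega)]
    simp

/-- for `β ∉ ℤ`, the 1-cocycle `δ_{1-β,β}` is not a 1-coboundary. -/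
theorem delta_not_coboundary (β : ℂ) (hβ : ∀ k : ℤ, (k : ℂ) ≠ β) :
    ¬ IsCoboundary (1 - β) β (deltaβ β) := by
  rintro ⟨u, hu⟩
  have hβ0 : β ≠ 0 := fun h => hβ 0 (by simp [h])
  -- u is supported on the antidiagonal
  have hsupp : ∀ a b : ℤ, a + b ≠ 0 → u (a, b) = 0 := by
    intro a b hab
    have h2 : (0 : ℂ) = tact (1 - β) β 0 u (a, b) := by
      rw [← hu 0, deltaβ_zero]; rfl
    rw [tact_apply] at h2
    have h3 : ((a : ℂ) + b) * u (a, b) = 0 := by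
      have e1 : (a - 0 : ℤ) = a := by ring
      have e2 : (b - 0 : ℤ) = b := by ring
      rw [e1, e2] at h2
      linear_combination h2
    have hcast : ((a : ℂ) + b) ≠ 0 := by
      have : ((a + b : ℤ) : ℂ) ≠ 0 := Int.cast_ne_zero.mpr hab
      push_cast at this; exact this
    exact (mul_eq_zero.mp h3).resolve_left hcast
  set c : ℤ → ℂ := fun k => u (k, -k) with hc
  -- recurrence from n = 1
  have hrec : ∀ k : ℤ, ((k : ℂ) - β) * (c k - c (k - 1)) = if k = 0 then -β else 0 := by
    intro k
    have h2 : deltaβ β 1 (k, 1 - k) = tact (1 - β) β 1 u (k, 1 - k) := by rw [hu 1]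
    rw [tact_apply, deltaβ_one] at h2
    have e1 : (1 - k - 1 : ℤ) = -k := by ring
    have e2 : (1 - k : ℤ) = -(k - 1) := by ring
    rw [e1, e2] at h2
    have hck : u (k, -k) = c k := rfl
    have hck1 : u (k - 1, -(k - 1)) = c (k - 1) := rfl
    rw [hck, hck1] at h2
    push_cast at h2 ⊢
    linear_combination -h2
  have hstep : ∀ k : ℤ, k ≠ 0 → c k = c (k - 1) := by
    intro k hk
    have h := hrec k
    rw [if_neg hk] at h
    have hkβ : (k : ℂ) - β ≠ 0 := sub_ne_zero.mpr (hβ k)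
    exact sub_eq_zero.mp ((mul_eq_zero.mp h).resolve_left hkβ)
  have hjump : c 0 - c (-1) = 1 := by
    have h := hrec 0
    rw [if_pos rfl] at h
    norm_num at h
    have h' : -β * (c 0 - c (-1)) = -β * 1 := by
      rw [mul_one]; linear_combination -h
    exact mul_left_cancel₀ (neg_ne_zero.mpr hβ0) h'
  -- constancy on each side
  have hup : ∀ k : ℤ, 0 ≤ k → c k = c 0 :=
    Int.le_induction rfl (fun n hn ih => by
      have h := hstep (n + 1) (by omega)
      have e : (n + 1 - 1 : ℤ) = n := by ring
      rw [e] at h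
      rw [h, ih])
  have hdown : ∀ k : ℤ, k ≤ -1 → c k = c (-1) :=
    Int.le_induction_down rfl (fun n hn ih => by
      have h := hstep n (by omega)
      rw [← h, ih])
  -- finiteness of support kills both constants
  obtain ⟨M, hM⟩ := (u.support.image Prod.fst).exists_le
  have hczero : ∀ k : ℤ, M < k → c k = 0 := by
    intro k hk
    by_contra h
    have hmem : ((k, -k) : ℤ × ℤ) ∈ u.support := Finsupp.mem_support_iff.mpr h
    have := hM k (Finset.mem_image.mpr ⟨(k, -k), hmem, rfl⟩)
    omega
  obtain ⟨N, hN⟩ := (u.support.image (fun p => -p.1)).exists_le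
  have hczero' : ∀ k : ℤ, k < -N → c k = 0 := by
    intro k hk
    by_contra h
    have hmem : ((k, -k) : ℤ × ℤ) ∈ u.support := Finsupp.mem_support_iff.mpr h
    have := hN (-k) (Finset.mem_image.mpr ⟨(k, -k), hmem, rfl⟩)
    omega
  have hc0 : c 0 = 0 := by
    have h1 := hup (max M 0 + 1) (by omega)
    have h2 := hczero (max M 0 + 1) (by omega)
    rw [h1] at h2; exact h2
  have hcm1 : c (-1) = 0 := by
    have h1 := hdown (min (-N) (-1) - 1) (by omega)
    have h2 := hczero' (min (-N) (-1) - 1) (by omega)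
    rw [h1] at h2; exact h2
  rw [hc0, hcm1] at hjump
  norm_num at hjump
end

section
/- The map δ¹_{0,1} : 𝒲 → 𝓕_0 ⊗ 𝓕_1 given by δ¹_{0,1}(L_n) = n² v_0 ⊗ w_n is a 1-cocycle of the Witt algebra, and it is not a 1-coboundary. -/
lemma tact_single (α β : ℂ) (m i j : ℤ) (c : ℂ) :
    tact α β m (Finsupp.single (i, j) c)
      = (c * (-((i : ℂ) + α * m))) • Finsupp.single (m + i, j) (1 : ℂ)
        + (c * (-((j : ℂ) + β * m))) • Finsupp.single (i, m + j) (1 : ℂ) := by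
  rw [tact, Finsupp.lsum_single, LinearMap.toSpanSingleton_apply]
  rw [smul_add, smul_smul, smul_smul]

/-- The "sum along the diagonal `i + j = n`" functional. -/
noncomputable def Fw (n : ℤ) : ((ℤ × ℤ) →₀ ℂ) →ₗ[ℂ] ℂ :=
  Finsupp.lsum ℂ fun p => if p.1 + p.2 = n then LinearMap.id else 0

lemma Fw_single (n i j : ℤ) (c : ℂ) :
    Fw n (Finsupp.single (i, j) c) = if i + j = n then c else 0 := by
  rw [Fw, Finsupp.lsum_single]
  split_ifs <;> simp

lemma Fw_tact (n m : ℤ) (x : (ℤ × ℤ) →₀ ℂ) :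
    Fw n (tact 0 1 m x) = (-(n : ℂ)) * Fw (n - m) x := by
  induction x using Finsupp.induction_linear with
  | zero => simp
  | add a b ha hb => rw [map_add, map_add, map_add, ha, hb]; ring
  | single p c =>
    obtain ⟨i, j⟩ := p
    rw [tact_single, map_add, map_smul, map_smul, Fw_single, Fw_single, Fw_single,
      smul_eq_mul, smul_eq_mul]
    by_cases h : i + j = n - m
    · have h1 : m + i + j = n := by omega
      have h2 : i + (m + j) = n := by omega
      rw [if_pos h, if_pos h1, if_pos h2]
      subst h1
      push_cast
      ring
    · have h1 : ¬ (m + i + j = n) := by omega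
      have h2 : ¬ (i + (m + j) = n) := by omega
      rw [if_neg h, if_neg h1, if_neg h2]; ring

/-- the map `δ¹_{0,1}(L_n) = n² v_0 ⊗ w_n` is a 1-cocycle of the
Witt algebra with coefficients in `𝓕_0 ⊗ 𝓕_1`, and not a 1-coboundary. -/
theorem d01sq_cocycle_not_coboundary :
    IsCocycle 0 1 (fun n => ((n : ℂ) ^ 2) • Finsupp.single ((0 : ℤ), n) (1 : ℂ)) ∧
    ¬ IsCoboundary 0 1 (fun n => ((n : ℂ) ^ 2) • Finsupp.single ((0 : ℤ), n) (1 : ℂ)) := by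
  constructor
  · intro m n
    simp only [map_smul, tact_single]
    have e1 : (m : ℤ) + n = n + m := by ring
    rw [e1] at *
    push_cast
    simp only [zero_mul, add_zero, neg_zero, mul_zero, zero_smul, zero_add, one_mul]
    rw [smul_smul, smul_smul, smul_smul, ← sub_smul]
    congr 1
    ring
  · rintro ⟨u, hu⟩
    have h1 := congrArg (Fw 1) (hu 1)
    have h2 := congrArg (Fw (-1)) (hu (-1))
    rw [Fw_tact] at h1 h2
    rw [map_smul, Fw_single] at h1 h2
    norm_num at h1 h2
    rw [← h2] at h1
    norm_num at h1
end
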